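/- Let β ≥ 2. There exist constants k₁, k₂ > 0 such that for every Schwartz function f : ℝ → ℂ, k₁·(‖f''‖² + ‖x ↦ |x|^β·f(x)‖² + ‖f‖²) ≤ ‖x ↦ -f''(x) + |x|^β·f(x)‖² + ‖f‖² ≤ k₂·(‖f''‖² + ‖x ↦ |x|^β·f(x)‖² + ‖f‖²). -/

import Mathlib

set_option maxHeartbeats 1000000

open MeasureTheory SchwartzMap Filter Set

/-- The `L²(ℝ)` norm of a function `f : ℝ → ℂ`. -/
noncomputable def L2N (f : ℝ → ℂ) : ℝ := (∫ x : ℝ, ‖f x‖ ^ 2) ^ ((1 : ℝ) / 2)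

lemma sq_L2N (g : ℝ → ℂ) : L2N g ^ 2 = ∫ x : ℝ, ‖g x‖ ^ 2 := by
  have h : 0 ≤ ∫ x : ℝ, ‖g x‖ ^ 2 := integral_nonneg fun x => by positivity
  rw [L2N, ← Real.rpow_natCast _ 2, ← Real.rpow_mul h]
  norm_num

-- pointwise poly bound
lemma poly_le (r : ℝ) (hr : 0 ≤ r) (n : ℕ) (hn : r ≤ n) (x : ℝ) :
    |x| ^ r ≤ 1 + |x| ^ n := by
  rcases le_total |x| 1 with h | h
  · have : |x| ^ r ≤ 1 := Real.rpow_le_one (abs_nonneg x) h hr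
    have hn' : (0:ℝ) ≤ |x| ^ n := by positivity
    linarith
  · have : |x| ^ r ≤ |x| ^ (n : ℝ) := Real.rpow_le_rpow_of_exponent_le h hn
    rw [Real.rpow_natCast] at this
    linarith

-- master integrability
lemma int_pow_mul (n : ℕ) (g h : SchwartzMap ℝ ℂ) :
    Integrable (fun x : ℝ => |x| ^ n * (‖g x‖ * ‖h x‖)) := by
  have hint : Integrable (fun x : ℝ => ‖x‖ ^ n * ‖h x‖) := h.integrable_pow_mul volume n
  refine (hint.const_mul (SchwartzMap.seminorm ℝ 0 0 g)).mono' ?_ ?_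
  · exact (((continuous_abs.pow n).mul ((g.continuous.norm).mul
      (h.continuous.norm)))).aestronglyMeasurable
  · filter_upwards with x
    have h1 : ‖g x‖ ≤ SchwartzMap.seminorm ℝ 0 0 g := g.norm_le_seminorm ℝ x
    have h2 : (0:ℝ) ≤ |x| ^ n * (‖g x‖ * ‖h x‖) := by positivity
    rw [Real.norm_eq_abs, _root_.abs_of_nonneg h2, Real.norm_eq_abs]
    calc |x| ^ n * (‖g x‖ * ‖h x‖) ≤ |x| ^ n * ((SchwartzMap.seminorm ℝ 0 0 g) * ‖h x‖) := by
          apply mul_le_mul_of_nonneg_left (by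
            exact mul_le_mul_of_nonneg_right h1 (norm_nonneg _)) (by positivity)
      _ = (SchwartzMap.seminorm ℝ 0 0 g) * (|x| ^ n * ‖h x‖) := by ring

lemma int_rpow_mul (r : ℝ) (hr : 0 ≤ r) (g h : SchwartzMap ℝ ℂ) :
    Integrable (fun x : ℝ => |x| ^ r * (‖g x‖ * ‖h x‖)) := by
  set n := ⌈r⌉₊
  have hn : r ≤ n := Nat.le_ceil r
  have h0 : Integrable (fun x : ℝ => ‖g x‖ * ‖h x‖) := by
    simpa using int_pow_mul 0 g h
  refine ((h0.add (int_pow_mul n g h))).mono' ?_ ?_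
  · apply Continuous.aestronglyMeasurable
    apply Continuous.mul ?_ ((g.continuous.norm).mul (h.continuous.norm))
    rcases hr.eq_or_lt with h | h
    · simp only [← h, Real.rpow_zero]; exact continuous_const
    · exact continuous_abs.rpow_const fun x => Or.inr hr
  · filter_upwards with x
    have h2 : (0:ℝ) ≤ |x| ^ r * (‖g x‖ * ‖h x‖) := by positivity
    rw [Real.norm_eq_abs, _root_.abs_of_nonneg h2]
    have := poly_le r hr n hn x
    have hgh : (0:ℝ) ≤ ‖g x‖ * ‖h x‖ := by positivity
    calc |x| ^ r * (‖g x‖ * ‖h x‖) ≤ (1 + |x| ^ n) * (‖g x‖ * ‖h x‖) :=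
          mul_le_mul_of_nonneg_right this hgh
      _ = ‖g x‖ * ‖h x‖ + |x| ^ n * (‖g x‖ * ‖h x‖) := by ring

section Osc
variable {β : ℝ} (hβ : 2 ≤ β)

-- derivative of V = |x|^β at x ≠ 0
lemma hasDerivAt_V {x : ℝ} (hx : x ≠ 0) :
    HasDerivAt (fun y : ℝ => |y| ^ β) (β * |x| ^ (β - 2) * x) x := by
  rcases hx.lt_or_gt with h | h
  · -- x < 0
    have h1 : HasDerivAt (fun t : ℝ => t ^ β) (β * (-x) ^ (β - 1)) (-x) := by
      simpa using Real.hasDerivAt_rpow_const (x := -x) (p := β) (Or.inl (by linarith [h] ; )) 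
    have h0 : HasDerivAt (fun y : ℝ => -y) (-1) x := (hasDerivAt_id x).neg
    have h2 : HasDerivAt (fun y : ℝ => (-y) ^ β) (β * (-x) ^ (β - 1) * (-1)) x :=
      HasDerivAt.comp x h1 h0
    have heq : (fun y : ℝ => |y| ^ β) =ᶠ[nhds x] fun y : ℝ => (-y) ^ β := by
      filter_upwards [eventually_lt_nhds h] with y hy
      rw [abs_of_neg hy]
    have h3 := h2.congr_of_eventuallyEq heq
    refine h3.congr_deriv ?_
    rw [abs_of_neg h, show β - 1 = (β - 2) + 1 by ring,
      Real.rpow_add_one (by linarith : -x ≠ 0)]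
    ring
  · -- 0 < x
    have h1 : HasDerivAt (fun t : ℝ => t ^ β) (β * x ^ (β - 1)) x :=
      Real.hasDerivAt_rpow_const (Or.inl h.ne')
    have heq : (fun y : ℝ => |y| ^ β) =ᶠ[nhds x] fun y : ℝ => y ^ β := by
      filter_upwards [eventually_gt_nhds h] with y hy
      rw [abs_of_pos hy]
    have h3 := h1.congr_of_eventuallyEq heq
    refine h3.congr_deriv ?_
    rw [abs_of_pos h, show β - 1 = (β - 2) + 1 by ring, Real.rpow_add_one h.ne']
    ring

-- derivative of V1 = β|x|^(β-2)x at x ≠ 0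
lemma hasDerivAt_V1 {x : ℝ} (hx : x ≠ 0) :
    HasDerivAt (fun y : ℝ => β * |y| ^ (β - 2) * y) (β * (β - 1) * |x| ^ (β - 2)) x := by
  rcases hx.lt_or_gt with h | h
  · have h1 : HasDerivAt (fun t : ℝ => t ^ (β - 1)) ((β - 1) * (-x) ^ (β - 2)) (-x) := by
      have := Real.hasDerivAt_rpow_const (x := -x) (p := β - 1) (Or.inl (by linarith : -x ≠ 0))
      convert this using 1
      ring_nf
    have h0 : HasDerivAt (fun y : ℝ => -y) (-1) x := (hasDerivAt_id x).neg
    have h2 : HasDerivAt (fun y : ℝ => (-y) ^ (β - 1)) ((β - 1) * (-x) ^ (β - 2) * (-1)) x :=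
      HasDerivAt.comp x h1 h0
    have h2' := (h2.const_mul (-β))
    have heq : (fun y : ℝ => β * |y| ^ (β - 2) * y) =ᶠ[nhds x]
        fun y : ℝ => -β * (-y) ^ (β - 1) := by
      filter_upwards [eventually_lt_nhds h] with y hy
      rw [abs_of_neg hy, show β - 1 = (β - 2) + 1 by ring,
        Real.rpow_add_one (by linarith : -y ≠ 0)]
      ring
    have h3 := h2'.congr_of_eventuallyEq heq
    refine h3.congr_deriv ?_
    rw [abs_of_neg h]
    ring
  · have h1 : HasDerivAt (fun t : ℝ => t ^ (β - 1)) ((β - 1) * x ^ (β - 2)) x := by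
      have := Real.hasDerivAt_rpow_const (x := x) (p := β - 1) (Or.inl h.ne')
      convert this using 1
      ring_nf
    have h2 := h1.const_mul β
    have heq : (fun y : ℝ => β * |y| ^ (β - 2) * y) =ᶠ[nhds x]
        fun y : ℝ => β * y ^ (β - 1) := by
      filter_upwards [eventually_gt_nhds h] with y hy
      rw [abs_of_pos hy, show β - 1 = (β - 2) + 1 by ring, Real.rpow_add_one hy.ne']
      ring
    have h3 := h2.congr_of_eventuallyEq heq
    refine h3.congr_deriv ?_
    rw [abs_of_pos h]
    ring

end Osc

-- complex helpers
lemma norm_sq_eq_re_star_mul (z : ℂ) : ‖z‖ ^ 2 = (star z * z).re := by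
  rw [Complex.sq_norm]
  simp [Complex.normSq_apply, Complex.mul_re]

lemma abs_re_star_mul_le (z w : ℂ) : |(star z * w).re| ≤ ‖z‖ * ‖w‖ := by
  calc |(star z * w).re| ≤ ‖star z * w‖ := Complex.abs_re_le_norm _
    _ = ‖z‖ * ‖w‖ := by simp

section F

variable (f : SchwartzMap ℝ ℂ)

noncomputable def g1 : SchwartzMap ℝ ℂ := SchwartzMap.derivCLM ℝ ℂ f
noncomputable def g2 : SchwartzMap ℝ ℂ := SchwartzMap.derivCLM ℝ ℂ (g1 f)

lemma hasDerivAt_f (x : ℝ) : HasDerivAt (⇑f) (g1 f x) x := by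
  simpa [g1, SchwartzMap.derivCLM_apply] using (f.differentiable x).hasDerivAt

lemma hasDerivAt_g1 (x : ℝ) : HasDerivAt (⇑(g1 f)) (g2 f x) x := by
  simpa [g2, SchwartzMap.derivCLM_apply] using ((g1 f).differentiable x).hasDerivAt

lemma deriv_f : deriv ⇑f = ⇑(g1 f) := by
  ext x
  simp [g1, SchwartzMap.derivCLM_apply]

lemma deriv_deriv_f : deriv (deriv ⇑f) = ⇑(g2 f) := by
  rw [deriv_f f]
  ext x
  simp [g2, SchwartzMap.derivCLM_apply]

noncomputable def uu : ℝ → ℝ := fun x => ‖f x‖ ^ 2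
noncomputable def uu1 : ℝ → ℝ := fun x => 2 * (star (f x) * g1 f x).re
noncomputable def uu2 : ℝ → ℝ := fun x => 2 * ‖g1 f x‖ ^ 2 + 2 * (star (f x) * g2 f x).re

lemma hasDerivAt_uu (x : ℝ) : HasDerivAt (uu f) (uu1 f x) x := by
  have hz : HasDerivAt (fun y => star (f y) * f y)
      (star (g1 f x) * f x + star (f x) * g1 f x) x :=
    ((hasDerivAt_f f x).star).mul (hasDerivAt_f f x)
  have h := Complex.reCLM.hasFDerivAt.comp_hasDerivAt x hz
  have heq : uu f = ⇑Complex.reCLM ∘ fun y => star (f y) * f y := by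
    ext y
    simp only [uu, Function.comp_apply, Complex.reCLM_apply]
    rw [norm_sq_eq_re_star_mul]
  rw [heq]
  refine h.congr_deriv ?_
  simp only [uu1, Complex.reCLM_apply, Complex.add_re, Complex.mul_re]
  simp [Complex.conj_re, Complex.conj_im]
  ring

lemma hasDerivAt_uu1 (x : ℝ) : HasDerivAt (uu1 f) (uu2 f x) x := by
  have hz : HasDerivAt (fun y => star (f y) * g1 f y)
      (star (g1 f x) * g1 f x + star (f x) * g2 f x) x :=
    ((hasDerivAt_f f x).star).mul (hasDerivAt_g1 f x)
  have h := (Complex.reCLM.hasFDerivAt.comp_hasDerivAt x hz).const_mul (2:ℝ)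
  refine h.congr_deriv ?_
  simp only [uu2, Complex.reCLM_apply, Complex.add_re]
  rw [norm_sq_eq_re_star_mul]
  ring

end F

section IBP

variable (β : ℝ) (f : SchwartzMap ℝ ℂ)

noncomputable def VV : ℝ → ℝ := fun x => |x| ^ β
noncomputable def VV1 : ℝ → ℝ := fun x => β * |x| ^ (β - 2) * x
noncomputable def VV2 : ℝ → ℝ := fun x => β * (β - 1) * |x| ^ (β - 2)
noncomputable def FF : ℝ → ℝ := fun x => VV β x * uu1 f x - VV1 β x * uu f x

lemma continuous_uu : Continuous (uu f) := by
  change Continuous (fun x => ‖f x‖ ^ 2); fun_prop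

lemma continuous_uu1 : Continuous (uu1 f) := by
  have : Continuous fun x => star (f x) * g1 f x :=
    (continuous_star.comp f.continuous).mul (g1 f).continuous
  exact continuous_const.mul (Complex.continuous_re.comp this)

lemma continuous_uu2 : Continuous (uu2 f) := by
  have h1 : Continuous fun x => star (f x) * g2 f x :=
    (continuous_star.comp f.continuous).mul (g2 f).continuous
  apply Continuous.add
  · fun_prop
  · exact continuous_const.mul (Complex.continuous_re.comp h1)

lemma hasDerivAt_FF (hβ : 2 ≤ β) {x : ℝ} (hx : x ≠ 0) :
    HasDerivAt (FF β f) (VV β x * uu2 f x - VV2 β x * uu f x) x := by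
  have h1 := (hasDerivAt_V (β := β) hx).mul (hasDerivAt_uu1 f x)
  have h2 := (hasDerivAt_V1 (β := β) hx).mul (hasDerivAt_uu f x)
  have h := h1.sub h2
  refine h.congr_deriv ?_
  simp only [VV, VV1, VV2]
  ring

lemma continuousAt_FF0 (hβ : 2 ≤ β) : ContinuousAt (FF β f) 0 := by
  have hV : ContinuousAt (VV β) 0 := by
    have h := Real.continuousAt_rpow_const (|(0:ℝ)|) β (Or.inr (by linarith))
    exact h.comp continuous_abs.continuousAt
  have hr : ContinuousAt (fun x : ℝ => |x| ^ (β - 2)) 0 := by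
    have h := Real.continuousAt_rpow_const (|(0:ℝ)|) (β - 2) (Or.inr (by linarith))
    exact h.comp continuous_abs.continuousAt
  have hV1 : ContinuousAt (VV1 β) 0 := by
    exact ((continuousAt_const.mul hr).mul continuousAt_id)
  exact (hV.mul (continuous_uu1 f).continuousAt).sub
    (hV1.mul (continuous_uu f).continuousAt)

lemma FF_zero (hβ : 2 ≤ β) : FF β f 0 = 0 := by
  simp [FF, VV, VV1, Real.zero_rpow (by linarith : β ≠ 0)]

lemma norm_FF_le (hβ : 2 ≤ β) :
    ∃ c : ℝ, ∀ x : ℝ, 1 ≤ |x| → ‖FF β f x‖ ≤ c / |x| := by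
  set n := ⌈β⌉₊ with hn_def
  have hn : β ≤ n := Nat.le_ceil β
  set S := SchwartzMap.seminorm ℝ (n + 1) 0 f with hS_def
  set Cf := SchwartzMap.seminorm ℝ 0 0 f with hCf_def
  set Cg := SchwartzMap.seminorm ℝ 0 0 (g1 f) with hCg_def
  have hS0 : 0 ≤ S := apply_nonneg _ _
  have hCf0 : 0 ≤ Cf := apply_nonneg _ _
  have hCg0 : 0 ≤ Cg := apply_nonneg _ _
  refine ⟨(2 * Cg + β * Cf) * S, fun x h1 => ?_⟩
  have hx0 : (0:ℝ) < |x| := lt_of_lt_of_le one_pos h1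
  have hb : |x| ^ β ≤ |x| ^ (n : ℕ) := by
    rw [← Real.rpow_natCast _ n]
    exact Real.rpow_le_rpow_of_exponent_le h1 hn
  have hb1 : |x| ^ (β - 1) ≤ |x| ^ (n : ℕ) := by
    rw [← Real.rpow_natCast _ n]
    exact Real.rpow_le_rpow_of_exponent_le h1 (by linarith)
  have hdecay : |x| ^ (n + 1 : ℕ) * ‖f x‖ ≤ S := by
    have := SchwartzMap.norm_pow_mul_le_seminorm ℝ f (n + 1) x
    rwa [Real.norm_eq_abs] at this
  have hfn : |x| ^ (n : ℕ) * ‖f x‖ ≤ S / |x| := by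
    rw [le_div_iff₀ hx0]
    calc |x| ^ (n : ℕ) * ‖f x‖ * |x| = |x| ^ (n + 1 : ℕ) * ‖f x‖ := by ring
      _ ≤ S := hdecay
  have hu1 : |uu1 f x| ≤ 2 * Cg * ‖f x‖ := by
    rw [uu1, abs_mul]
    have := abs_re_star_mul_le (f x) (g1 f x)
    have hg : ‖g1 f x‖ ≤ Cg := (g1 f).norm_le_seminorm ℝ x
    calc |(2:ℝ)| * |(star (f x) * g1 f x).re| ≤ 2 * (‖f x‖ * ‖g1 f x‖) := by
          rw [abs_two]; nlinarith [norm_nonneg (f x), norm_nonneg (g1 f x)]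
      _ ≤ 2 * Cg * ‖f x‖ := by nlinarith [norm_nonneg (f x)]
  have hu : |uu f x| ≤ Cf * ‖f x‖ := by
    rw [uu, abs_of_nonneg (by positivity)]
    have hf : ‖f x‖ ≤ Cf := f.norm_le_seminorm ℝ x
    nlinarith [norm_nonneg (f x)]
  have hV1abs : |VV1 β x| = β * |x| ^ (β - 1) := by
    rw [VV1, show β - 1 = (β - 2) + 1 by ring, Real.rpow_add_one hx0.ne']
    rw [abs_mul, abs_mul]
    rw [abs_of_nonneg (by linarith : (0:ℝ) ≤ β), abs_of_nonneg (by positivity)]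
    ring
  have hVabs : |VV β x| = |x| ^ β := by
    rw [VV, abs_of_nonneg (by positivity)]
  rw [Real.norm_eq_abs]
  calc |FF β f x| ≤ |VV β x * uu1 f x| + |VV1 β x * uu f x| := abs_sub _ _
    _ = |VV β x| * |uu1 f x| + |VV1 β x| * |uu f x| := by rw [abs_mul, abs_mul]
    _ ≤ |x| ^ (n:ℕ) * (2 * Cg * ‖f x‖) + β * |x| ^ (n:ℕ) * (Cf * ‖f x‖) := by
        rw [hVabs, hV1abs]
        have h3 : (0:ℝ) ≤ |x| ^ β := by positivity
        have h4 : (0:ℝ) ≤ |x| ^ (β - 1) := by positivity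
        have h5 : (0:ℝ) ≤ |x| ^ (n:ℕ) := by positivity
        have habs1 : (0:ℝ) ≤ |uu1 f x| := abs_nonneg _
        have habs : (0:ℝ) ≤ |uu f x| := abs_nonneg _
        have hβ0 : (0:ℝ) < β := by linarith
        nlinarith [mul_le_mul hb hu1 habs1 h5, mul_le_mul hb1 hu habs h5,
          mul_le_mul_of_nonneg_left (mul_le_mul hb1 hu habs h5) hβ0.le]
    _ = (2 * Cg + β * Cf) * (|x| ^ (n:ℕ) * ‖f x‖) := by ring
    _ ≤ (2 * Cg + β * Cf) * (S / |x|) := by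
        apply mul_le_mul_of_nonneg_left hfn (by positivity)
    _ = (2 * Cg + β * Cf) * S / |x| := by ring

lemma tendsto_FF_atTop (hβ : 2 ≤ β) : Filter.Tendsto (FF β f) Filter.atTop (nhds 0) := by
  obtain ⟨c, hc⟩ := norm_FF_le β f hβ
  apply squeeze_zero_norm' (a := fun x => c / |x|)
  · filter_upwards [Filter.eventually_ge_atTop (1:ℝ)] with x hx
    exact hc x (by rw [abs_of_nonneg (by linarith)]; linarith)
  · have h := tendsto_abs_atTop_atTop.inv_tendsto_atTop.const_mul c
    simpa [div_eq_mul_inv] using h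

lemma tendsto_FF_atBot (hβ : 2 ≤ β) : Filter.Tendsto (FF β f) Filter.atBot (nhds 0) := by
  obtain ⟨c, hc⟩ := norm_FF_le β f hβ
  apply squeeze_zero_norm' (a := fun x => c / |x|)
  · filter_upwards [Filter.eventually_le_atBot (-1:ℝ)] with x hx
    exact hc x (by rw [abs_of_nonpos (by linarith)]; linarith)
  · have h := tendsto_abs_atBot_atTop.inv_tendsto_atTop.const_mul c
    simpa [div_eq_mul_inv] using h

lemma integrable_V_uu2 (hβ : 2 ≤ β) : Integrable (fun x => VV β x * uu2 f x) := by
  have hd : Integrable (fun x : ℝ => 2 * (|x| ^ β * (‖g1 f x‖ * ‖g1 f x‖))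
      + 2 * (|x| ^ β * (‖f x‖ * ‖g2 f x‖))) :=
    ((int_rpow_mul β (by linarith) (g1 f) (g1 f)).const_mul 2).add
      ((int_rpow_mul β (by linarith) f (g2 f)).const_mul 2)
  refine hd.mono' ?_ ?_
  · apply Continuous.aestronglyMeasurable
    exact (continuous_abs.rpow_const (fun x => Or.inr (by linarith))).mul (continuous_uu2 f)
  · filter_upwards with x
    have h0 : (0:ℝ) ≤ |x| ^ β := by positivity
    rw [Real.norm_eq_abs, VV, abs_mul, _root_.abs_of_nonneg h0]
    have h1 : |uu2 f x| ≤ 2 * (‖g1 f x‖ * ‖g1 f x‖) + 2 * (‖f x‖ * ‖g2 f x‖) := by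
      rw [uu2]
      have h2 := abs_re_star_mul_le (f x) (g2 f x)
      calc |2 * ‖g1 f x‖ ^ 2 + 2 * (star (f x) * g2 f x).re|
          ≤ |2 * ‖g1 f x‖ ^ 2| + |2 * (star (f x) * g2 f x).re| := abs_add_le _ _
        _ ≤ 2 * (‖g1 f x‖ * ‖g1 f x‖) + 2 * (‖f x‖ * ‖g2 f x‖) := by
            rw [abs_mul, abs_mul, abs_two, _root_.abs_of_nonneg (by positivity :
              (0:ℝ) ≤ ‖g1 f x‖ ^ 2)]
            have h3 := abs_nonneg ((star (f x) * g2 f x).re)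
            nlinarith
    calc |x| ^ β * |uu2 f x| ≤ |x| ^ β * (2 * (‖g1 f x‖ * ‖g1 f x‖) + 2 * (‖f x‖ * ‖g2 f x‖)) :=
          mul_le_mul_of_nonneg_left h1 h0
      _ = 2 * (|x| ^ β * (‖g1 f x‖ * ‖g1 f x‖)) + 2 * (|x| ^ β * (‖f x‖ * ‖g2 f x‖)) := by ring

lemma integrable_V2_uu (hβ : 2 ≤ β) : Integrable (fun x => VV2 β x * uu f x) := by
  have hd := (int_rpow_mul (β - 2) (by linarith) f f).const_mul (β * (β - 1))
  refine hd.congr ?_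
  filter_upwards with x
  simp only [VV2, uu]
  rw [norm_sq_eq_re_star_mul]
  have : ‖f x‖ * ‖f x‖ = (star (f x) * f x).re := by
    rw [← norm_sq_eq_re_star_mul]; ring
  rw [← this]
  ring

lemma ibp (hβ : 2 ≤ β) : ∫ x : ℝ, VV β x * uu2 f x = ∫ x : ℝ, VV2 β x * uu f x := by
  have hint : Integrable (fun x => VV β x * uu2 f x - VV2 β x * uu f x) :=
    (integrable_V_uu2 β f hβ).sub (integrable_V2_uu β f hβ)
  have hIoi : ∫ x in Set.Ioi (0:ℝ), (VV β x * uu2 f x - VV2 β x * uu f x) = 0 := by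
    rw [integral_Ioi_of_hasDerivAt_of_tendsto
      ((continuousAt_FF0 β f hβ).continuousWithinAt)
      (fun x hx => hasDerivAt_FF β f hβ (ne_of_gt hx))
      hint.integrableOn (tendsto_FF_atTop β f hβ)]
    rw [FF_zero β f hβ]
    ring
  have hIic : ∫ x in Set.Iic (0:ℝ), (VV β x * uu2 f x - VV2 β x * uu f x) = 0 := by
    rw [integral_Iic_of_hasDerivAt_of_tendsto
      ((continuousAt_FF0 β f hβ).continuousWithinAt)
      (fun x hx => hasDerivAt_FF β f hβ (ne_of_lt hx))
      hint.integrableOn (tendsto_FF_atBot β f hβ)]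
    rw [FF_zero β f hβ]
    ring
  have htot : ∫ x : ℝ, (VV β x * uu2 f x - VV2 β x * uu f x) = 0 := by
    rw [← intervalIntegral.integral_Iic_add_Ioi (b := (0:ℝ)) hint.integrableOn hint.integrableOn, hIoi, hIic]
    ring
  rw [integral_sub (integrable_V_uu2 β f hβ) (integrable_V2_uu β f hβ)] at htot
  linarith

end IBP

-- pointwise complex identities
lemma key_id (v : ℝ) (z w : ℂ) :
    ‖(v:ℂ) * z‖ ^ 2 = v * (star z * (-w + (v:ℂ) * z)).re + v * (star z * w).re := by
  simp only [Complex.mul_re, Complex.add_re, Complex.neg_re, Complex.neg_im,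
    Complex.add_im, norm_mul, mul_pow, Complex.norm_real, Real.norm_eq_abs, sq_abs,
    Complex.sq_norm, Complex.normSq_apply, Complex.star_def,
    Complex.conj_re, Complex.conj_im, Complex.ofReal_re, Complex.ofReal_im, Complex.mul_im]
  ring

lemma key_amgm (v : ℝ) (z w : ℂ) :
    v * (star z * w).re ≤ (1/2) * ‖(v:ℂ)*z‖^2 + (1/2) * ‖w‖^2 := by
  have h1 : v * (star z * w).re = (star ((v:ℂ)*z) * w).re := by
    simp [Complex.mul_re]; ring
  have h2 : |(star ((v:ℂ)*z) * w).re| ≤ ‖(v:ℂ)*z‖ * ‖w‖ := by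
    calc |(star ((v:ℂ)*z) * w).re| ≤ ‖star ((v:ℂ)*z) * w‖ := Complex.abs_re_le_norm _
      _ = ‖(v:ℂ)*z‖ * ‖w‖ := by simp
  nlinarith [abs_nonneg ((star ((v:ℂ)*z) * w).re), le_abs_self ((star ((v:ℂ)*z) * w).re),
    sq_nonneg (‖(v:ℂ)*z‖ - ‖w‖)]

section Main

variable (β : ℝ) (f : SchwartzMap ℝ ℂ)

noncomputable def Tf : ℝ → ℂ := fun x => -(g2 f x) + ((VV β x : ℝ) : ℂ) * f x

lemma continuous_VV (hβ0 : 0 ≤ β) : Continuous (VV β) :=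
  continuous_abs.rpow_const fun _ => Or.inr hβ0

lemma VV_nonneg (x : ℝ) : 0 ≤ VV β x := by
  simp only [VV]; positivity

lemma continuous_Tf (hβ : 2 ≤ β) : Continuous (Tf β f) :=
  ((g2 f).continuous.neg).add
    (((Complex.continuous_ofReal.comp (continuous_VV β (by linarith)))).mul f.continuous)

lemma norm_V_mul (x : ℝ) (z : ℂ) : ‖((VV β x : ℝ) : ℂ) * z‖ = VV β x * ‖z‖ := by
  rw [norm_mul, Complex.norm_real, Real.norm_eq_abs, _root_.abs_of_nonneg (VV_nonneg β x)]

lemma iA : Integrable (fun x => ‖g2 f x‖^2) := by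
  refine (int_pow_mul 0 (g2 f) (g2 f)).congr ?_
  filter_upwards with x; simp [sq]

lemma iC : Integrable (fun x => ‖f x‖^2) := by
  refine (int_pow_mul 0 f f).congr ?_
  filter_upwards with x; simp [sq]

lemma iB (hβ : 2 ≤ β) : Integrable (fun x => ‖((VV β x : ℝ) : ℂ) * f x‖^2) := by
  refine (int_rpow_mul (β*2) (by linarith) f f).congr ?_
  filter_upwards with x
  rw [norm_V_mul, mul_pow, VV, ← Real.rpow_natCast (|x|^β) 2, ← Real.rpow_mul (abs_nonneg x)]
  push_cast
  rw [sq]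

lemma iT (hβ : 2 ≤ β) : Integrable (fun x => ‖Tf β f x‖^2) := by
  refine (((iA f).const_mul 2).add ((iB β f hβ).const_mul 2)).mono' ?_ ?_
  · exact ((continuous_Tf β f hβ).norm.pow 2).aestronglyMeasurable
  · filter_upwards with x
    rw [Real.norm_eq_abs, _root_.abs_of_nonneg (by positivity)]
    have := norm_add_le (-(g2 f x)) (((VV β x : ℝ) : ℂ) * f x)
    rw [norm_neg] at this
    have h2 : ‖Tf β f x‖ ≤ ‖g2 f x‖ + ‖((VV β x : ℝ) : ℂ) * f x‖ := this
    simp only [Pi.add_apply]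
    nlinarith [norm_nonneg (Tf β f x), norm_nonneg (g2 f x),
      norm_nonneg (((VV β x : ℝ) : ℂ) * f x), sq_nonneg (‖g2 f x‖ - ‖((VV β x : ℝ) : ℂ) * f x‖)]

lemma iX (hβ : 2 ≤ β) : Integrable (fun x => VV β x * (star (f x) * g2 f x).re) := by
  refine (int_rpow_mul β (by linarith) f (g2 f)).mono' ?_ ?_
  · exact ((continuous_VV β (by linarith)).mul (Complex.continuous_re.comp
      ((continuous_star.comp f.continuous).mul (g2 f).continuous))).aestronglyMeasurable
  · filter_upwards with x
    rw [Real.norm_eq_abs, abs_mul, _root_.abs_of_nonneg (VV_nonneg β x)]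
    exact mul_le_mul_of_nonneg_left (abs_re_star_mul_le _ _) (VV_nonneg β x)

lemma iP (hβ : 2 ≤ β) : Integrable (fun x => VV β x * (star (f x) * Tf β f x).re) := by
  refine ((int_rpow_mul β (by linarith) f (g2 f)).add
    (int_rpow_mul (β*2) (by linarith) f f)).mono' ?_ ?_
  · exact ((continuous_VV β (by linarith)).mul (Complex.continuous_re.comp
      ((continuous_star.comp f.continuous).mul (continuous_Tf β f hβ)))).aestronglyMeasurable
  · filter_upwards with x
    rw [Real.norm_eq_abs, abs_mul, _root_.abs_of_nonneg (VV_nonneg β x)]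
    have h1 : |(star (f x) * Tf β f x).re| ≤ ‖f x‖ * ‖Tf β f x‖ := abs_re_star_mul_le _ _
    have h2 : ‖Tf β f x‖ ≤ ‖g2 f x‖ + VV β x * ‖f x‖ := by
      have := norm_add_le (-(g2 f x)) (((VV β x : ℝ) : ℂ) * f x)
      rw [norm_neg, norm_V_mul] at this
      exact this
    have hV := VV_nonneg β x
    have hV2 : VV β x * VV β x = |x| ^ (β*2) := by
      rw [VV, show β*2 = β + β by ring, Real.rpow_add' (abs_nonneg x) (by linarith)]
    have : VV β x * |(star (f x) * Tf β f x).re| ≤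
        VV β x * (‖f x‖ * (‖g2 f x‖ + VV β x * ‖f x‖)) := by
      apply mul_le_mul_of_nonneg_left _ hV
      calc |(star (f x) * Tf β f x).re| ≤ ‖f x‖ * ‖Tf β f x‖ := h1
        _ ≤ ‖f x‖ * (‖g2 f x‖ + VV β x * ‖f x‖) :=
            mul_le_mul_of_nonneg_left h2 (norm_nonneg _)
    calc VV β x * |(star (f x) * Tf β f x).re|
        ≤ VV β x * (‖f x‖ * (‖g2 f x‖ + VV β x * ‖f x‖)) := this
      _ = VV β x * (‖f x‖ * ‖g2 f x‖) + (VV β x * VV β x) * (‖f x‖ * ‖f x‖) := by ring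
      _ = |x| ^ β * (‖f x‖ * ‖g2 f x‖) + |x| ^ (β*2) * (‖f x‖ * ‖f x‖) := by rw [hV2, VV]

lemma iVg1 (hβ : 2 ≤ β) : Integrable (fun x => VV β x * ‖g1 f x‖^2) := by
  refine (int_rpow_mul β (by linarith) (g1 f) (g1 f)).congr ?_
  filter_upwards with x
  rw [VV, sq]

lemma iVu (hβ : 2 ≤ β) : Integrable (fun x => VV β x * ‖f x‖^2) := by
  refine (int_rpow_mul β (by linarith) f f).congr ?_
  filter_upwards with x
  rw [VV, sq]

lemma iMid (hβ : 2 ≤ β) : Integrable (fun x => |x|^(β-2) * ‖f x‖^2) := by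
  refine (int_rpow_mul (β-2) (by linarith) f f).congr ?_
  filter_upwards with x
  rw [sq]

lemma main_upper (hβ : 2 ≤ β) :
    (∫ x : ℝ, ‖Tf β f x‖^2) ≤ 2 * (∫ x : ℝ, ‖g2 f x‖^2)
      + 2 * ∫ x : ℝ, ‖((VV β x : ℝ) : ℂ) * f x‖^2 := by
  have hdom : Integrable (fun x : ℝ => 2 * ‖g2 f x‖^2 + 2 * ‖((VV β x : ℝ) : ℂ) * f x‖^2) :=
    ((iA f).const_mul 2).add ((iB β f hβ).const_mul 2)
  have h := integral_mono (iT β f hβ) hdom (fun x => by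
      have h2 : ‖Tf β f x‖ ≤ ‖g2 f x‖ + ‖((VV β x : ℝ) : ℂ) * f x‖ := by
        have := norm_add_le (-(g2 f x)) (((VV β x : ℝ) : ℂ) * f x)
        rwa [norm_neg] at this
      nlinarith [norm_nonneg (Tf β f x), norm_nonneg (g2 f x),
        norm_nonneg (((VV β x : ℝ) : ℂ) * f x), sq_nonneg (‖g2 f x‖ - ‖((VV β x:ℝ):ℂ) * f x‖)])
  rwa [integral_add ((iA f).const_mul 2) ((iB β f hβ).const_mul 2),
    integral_const_mul, integral_const_mul] at h

lemma main_lower (hβ : 2 ≤ β) :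
    ∃ M : ℝ, 0 < M ∧ ∀ f : SchwartzMap ℝ ℂ,
      (∫ x : ℝ, ‖g2 f x‖^2) + (∫ x : ℝ, ‖((VV β x : ℝ) : ℂ) * f x‖^2) + (∫ x : ℝ, ‖f x‖^2)
        ≤ M * ((∫ x : ℝ, ‖Tf β f x‖^2) + ∫ x : ℝ, ‖f x‖^2) := by
  set K := β * (β - 1) / 2 with hK_def
  have hK1 : 1 ≤ K := by rw [hK_def]; nlinarith
  have hK0 : 0 < K := by linarith
  set Q := K + K^2 with hQ_def
  have hQ0 : 0 ≤ Q := by positivity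
  refine ⟨12 * Q + 9, by positivity, fun f => ?_⟩
  set A := ∫ x : ℝ, ‖g2 f x‖^2 with hA_def
  set B := ∫ x : ℝ, ‖((VV β x : ℝ) : ℂ) * f x‖^2 with hB_def
  set C := ∫ x : ℝ, ‖f x‖^2 with hC_def
  set T := ∫ x : ℝ, ‖Tf β f x‖^2 with hT_def
  have hC0 : 0 ≤ C := integral_nonneg fun x => by positivity
  have hT0 : 0 ≤ T := integral_nonneg fun x => by positivity
  have hB0 : 0 ≤ B := integral_nonneg fun x => by positivity
  -- split B
  have hBsplit : B = (∫ x : ℝ, VV β x * (star (f x) * Tf β f x).re)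
      + ∫ x : ℝ, VV β x * (star (f x) * g2 f x).re := by
    rw [hB_def, ← integral_add (iP β f hβ) (iX β f hβ)]
    apply integral_congr_ae
    filter_upwards with x
    exact key_id (VV β x) (f x) (g2 f x)
  -- bound the P part
  have hP : (∫ x : ℝ, VV β x * (star (f x) * Tf β f x).re) ≤ (1/2) * B + (1/2) * T := by
    have hdom : Integrable (fun x : ℝ => (1/2) * ‖((VV β x : ℝ) : ℂ) * f x‖^2
        + (1/2) * ‖Tf β f x‖^2) :=
      ((iB β f hβ).const_mul (1/2)).add ((iT β f hβ).const_mul (1/2))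
    have h := integral_mono (iP β f hβ) hdom
      (fun x => key_amgm (VV β x) (f x) (Tf β f x))
    rwa [integral_add ((iB β f hβ).const_mul (1/2)) ((iT β f hβ).const_mul (1/2)),
      integral_const_mul, integral_const_mul] at h
  -- bound the X part
  have hXeq : (∫ x : ℝ, VV β x * (star (f x) * g2 f x).re)
      = (1/2) * (∫ x : ℝ, VV β x * uu2 f x) - ∫ x : ℝ, VV β x * ‖g1 f x‖^2 := by
    rw [← integral_const_mul, ← integral_sub ((integrable_V_uu2 β f hβ).const_mul (1/2))
      (iVg1 β f hβ)]
    apply integral_congr_ae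
    filter_upwards with x
    rw [uu2]
    ring
  have hVg1_nonneg : 0 ≤ ∫ x : ℝ, VV β x * ‖g1 f x‖^2 :=
    integral_nonneg fun x => mul_nonneg (VV_nonneg β x) (by positivity)
  have hX1 : (∫ x : ℝ, VV β x * (star (f x) * g2 f x).re)
      ≤ (1/2) * ∫ x : ℝ, VV2 β x * uu f x := by
    rw [hXeq, ibp β f hβ]
    linarith
  have hV2eq : (∫ x : ℝ, VV2 β x * uu f x)
      = (β * (β-1)) * ∫ x : ℝ, |x| ^ (β - 2) * ‖f x‖^2 := by
    rw [← integral_const_mul]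
    apply integral_congr_ae
    filter_upwards with x
    rw [VV2, uu]
    ring
  have hMid : (∫ x : ℝ, |x| ^ (β - 2) * ‖f x‖^2) ≤ C + ∫ x : ℝ, VV β x * ‖f x‖^2 := by
    have hdom : Integrable (fun x : ℝ => ‖f x‖^2 + VV β x * ‖f x‖^2) :=
      (iC f).add (iVu β f hβ)
    have h := integral_mono (iMid β f hβ) hdom (fun x => by
      have hx : |x| ^ (β - 2) ≤ 1 + |x| ^ β := by
        rcases le_total |x| 1 with h1 | h1
        · have : |x| ^ (β - 2) ≤ 1 := Real.rpow_le_one (abs_nonneg x) h1 (by linarith)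
          have h2 : (0:ℝ) ≤ |x| ^ β := by positivity
          linarith
        · have : |x| ^ (β - 2) ≤ |x| ^ β := Real.rpow_le_rpow_of_exponent_le h1 (by linarith)
          linarith
      have hf2 : (0:ℝ) ≤ ‖f x‖^2 := by positivity
      calc |x| ^ (β - 2) * ‖f x‖^2 ≤ (1 + |x| ^ β) * ‖f x‖^2 :=
            mul_le_mul_of_nonneg_right hx hf2
        _ = ‖f x‖^2 + VV β x * ‖f x‖^2 := by rw [VV]; ring)
    rwa [integral_add (iC f) (iVu β f hβ)] at h
  have hVu : (∫ x : ℝ, VV β x * ‖f x‖^2) ≤ (1/(4*K)) * B + K * C := by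
    have hdom : Integrable (fun x : ℝ => (1/(4*K)) * ‖((VV β x : ℝ) : ℂ) * f x‖^2
        + K * ‖f x‖^2) :=
      ((iB β f hβ).const_mul (1/(4*K))).add ((iC f).const_mul K)
    have h := integral_mono (iVu β f hβ) hdom
      (fun x => by
        have hnv : ‖((VV β x : ℝ) : ℂ) * f x‖ = VV β x * ‖f x‖ := norm_V_mul β x (f x)
        rw [hnv]
        have key : (1/(4*K)) * (VV β x * ‖f x‖)^2 + K * ‖f x‖^2 - VV β x * ‖f x‖ * ‖f x‖
            = (1/(4*K)) * (VV β x * ‖f x‖ - 2 * K * ‖f x‖)^2 := by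
          field_simp
          ring
        nlinarith [sq_nonneg (VV β x * ‖f x‖ - 2 * K * ‖f x‖),
          mul_nonneg (by positivity : (0:ℝ) ≤ 1/(4*K))
            (sq_nonneg (VV β x * ‖f x‖ - 2 * K * ‖f x‖))])
    rwa [integral_add ((iB β f hβ).const_mul (1/(4*K))) ((iC f).const_mul K),
      integral_const_mul, integral_const_mul] at h
  -- combine for X
  have hX : (∫ x : ℝ, VV β x * (star (f x) * g2 f x).re) ≤ (1/4) * B + Q * C := by
    have h1 : (1/2) * (∫ x : ℝ, VV2 β x * uu f x)
        = K * ∫ x : ℝ, |x| ^ (β - 2) * ‖f x‖^2 := by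
      rw [hV2eq, hK_def]; ring
    have h2 : K * (∫ x : ℝ, |x| ^ (β - 2) * ‖f x‖^2)
        ≤ K * (C + ∫ x : ℝ, VV β x * ‖f x‖^2) :=
      mul_le_mul_of_nonneg_left hMid hK0.le
    have h3 : K * (C + ∫ x : ℝ, VV β x * ‖f x‖^2)
        ≤ K * (C + ((1/(4*K)) * B + K * C)) := by
      apply mul_le_mul_of_nonneg_left _ hK0.le
      linarith
    have h4 : K * (C + ((1/(4*K)) * B + K * C)) = (1/4) * B + Q * C := by
      rw [hQ_def]
      field_simp
      ring
    linarith [hX1]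
  clear_value K Q A B C T
  -- B bound
  have hB : B ≤ 2 * T + 4 * (Q * C) := by
    have hsum := add_le_add hP hX
    rw [← hBsplit] at hsum
    linarith [hsum]
  -- A bound
  have hA : A ≤ 2 * T + 2 * B := by
    have hdom : Integrable (fun x : ℝ => 2 * ‖Tf β f x‖^2
        + 2 * ‖((VV β x : ℝ) : ℂ) * f x‖^2) :=
      ((iT β f hβ).const_mul 2).add ((iB β f hβ).const_mul 2)
    have h := integral_mono (iA f) hdom
      (fun x => by
        have hid : g2 f x = ((VV β x : ℝ) : ℂ) * f x - Tf β f x := by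
          rw [Tf]; ring
        have h2 : ‖g2 f x‖ ≤ ‖((VV β x : ℝ) : ℂ) * f x‖ + ‖Tf β f x‖ := by
          rw [hid]; exact norm_sub_le _ _
        nlinarith [norm_nonneg (g2 f x), norm_nonneg (Tf β f x),
          norm_nonneg (((VV β x : ℝ) : ℂ) * f x),
          sq_nonneg (‖((VV β x : ℝ) : ℂ) * f x‖ - ‖Tf β f x‖)])
    rw [integral_add ((iT β f hβ).const_mul 2) ((iB β f hβ).const_mul 2),
      integral_const_mul, integral_const_mul] at h
    rw [hA_def, hT_def, hB_def]
    exact h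
  -- final combination
  have e1 : (12 * Q + 9) * (T + C) = 12 * (Q * T) + 9 * T + 12 * (Q * C) + 9 * C := by ring
  have e2 : 0 ≤ Q * T := mul_nonneg hQ0 hT0
  have e3 : 0 ≤ Q * C := mul_nonneg hQ0 hC0
  linarith [hA, hB, e2, e3]

end Main

/-- Graph-norm equivalence for the anharmonic oscillator `T = -d²/dx² + |x|^β`, `β ≥ 2`. -/
theorem stmt_9 (β : ℝ) (hβ : 2 ≤ β) :
    ∃ k₁ k₂ : ℝ, 0 < k₁ ∧ 0 < k₂ ∧
      ∀ f : SchwartzMap ℝ ℂ,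
        k₁ * (L2N (deriv (deriv ⇑f)) ^ 2 + L2N (fun x : ℝ => ((|x| ^ β : ℝ) : ℂ) * f x) ^ 2
            + L2N ⇑f ^ 2)
          ≤ L2N (fun x : ℝ => -(deriv (deriv ⇑f) x) + ((|x| ^ β : ℝ) : ℂ) * f x) ^ 2
            + L2N ⇑f ^ 2 ∧
        L2N (fun x : ℝ => -(deriv (deriv ⇑f) x) + ((|x| ^ β : ℝ) : ℂ) * f x) ^ 2
            + L2N ⇑f ^ 2
          ≤ k₂ * (L2N (deriv (deriv ⇑f)) ^ 2
            + L2N (fun x : ℝ => ((|x| ^ β : ℝ) : ℂ) * f x) ^ 2 + L2N ⇑f ^ 2) := by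
  obtain ⟨M, hM, hmain⟩ := main_lower β hβ
  refine ⟨1/M, 2, by positivity, by norm_num, fun f => ?_⟩
  have hdd : deriv (deriv ⇑f) = ⇑(g2 f) := deriv_deriv_f f
  rw [hdd]
  simp only [sq_L2N]
  have E1 : (∫ x : ℝ, ‖((|x| ^ β : ℝ) : ℂ) * f x‖^2)
      = ∫ x : ℝ, ‖((VV β x : ℝ) : ℂ) * f x‖^2 := rfl
  have E2 : (∫ x : ℝ, ‖-(g2 f x) + ((|x| ^ β : ℝ) : ℂ) * f x‖^2)
      = ∫ x : ℝ, ‖Tf β f x‖^2 := rfl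
  rw [E1, E2]
  set A := ∫ x : ℝ, ‖g2 f x‖^2 with hA_def
  set B := ∫ x : ℝ, ‖((VV β x : ℝ) : ℂ) * f x‖^2 with hB_def
  set C := ∫ x : ℝ, ‖f x‖^2 with hC_def
  set T := ∫ x : ℝ, ‖Tf β f x‖^2 with hT_def
  have hC0 : 0 ≤ C := integral_nonneg fun x => by positivity
  have h := hmain f
  constructor
  · calc 1/M * (A + B + C) ≤ 1/M * (M * (T + C)) := by
          apply mul_le_mul_of_nonneg_left h (by positivity)
      _ = T + C := by field_simp
  · have h2 := main_upper β f hβ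
    linarith [h2]
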